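/- arXiv:1909.11746 — 7 statements merged into one kernel-verified Lean document; each statement's English description precedes it below -/
import Mathlib

section
/- Let G_ε(x) = 2xε / (1 − x + ε(1+x) + √((1 − x + ε(1+x))² − 4(1−x)xε)) for x ≥ 0 and ε > 0 (the Goldbeter–Koshland function). Then for every x ∈ [0,1), G_ε(x) → 0 as ε → 0⁺, and for every x > 1, G_ε(x) → 1 as ε → 0⁺. -/
open Filter Topology

/-- The Goldbeter–Koshland function. -/
noncomputable def GK (ε x : ℝ) : ℝ :=
  2 * x * ε /
    (1 - x + ε * (1 + x) + Real.sqrt ((1 - x + ε * (1 + x)) ^ 2 - 4 * (1 - x) * x * ε))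

/-- For `x ∈ [0,1)`, `G_ε(x) → 0` as `ε → 0⁺`; for `x > 1`, `G_ε(x) → 1` as `ε → 0⁺`. -/
theorem goldbeter_koshland_pointwise_limit :
    (∀ x : ℝ, 0 ≤ x → x < 1 →
      Tendsto (fun ε : ℝ => GK ε x) (nhdsWithin 0 (Set.Ioi 0)) (nhds 0)) ∧
    (∀ x : ℝ, 1 < x →
      Tendsto (fun ε : ℝ => GK ε x) (nhdsWithin 0 (Set.Ioi 0)) (nhds 1)) := by
  constructor
  · intro x hx0 hx1
    have h1 : (0:ℝ) < 1 - x := by linarith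
    have hcd : Continuous (fun ε : ℝ =>
        1 - x + ε * (1 + x) + Real.sqrt ((1 - x + ε * (1 + x)) ^ 2 - 4 * (1 - x) * x * ε)) := by
      apply Continuous.add (by continuity)
      exact Real.continuous_sqrt.comp (by continuity)
    have hd : Tendsto (fun ε : ℝ =>
        1 - x + ε * (1 + x) + Real.sqrt ((1 - x + ε * (1 + x)) ^ 2 - 4 * (1 - x) * x * ε))
        (nhds 0) (nhds (2 * (1 - x))) := by
      have h := hcd.tendsto 0
      have hv : (1 - x + 0 * (1 + x) + Real.sqrt ((1 - x + 0 * (1 + x)) ^ 2 - 4 * (1 - x) * x * 0))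
          = 2 * (1 - x) := by
        rw [show (1 - x + 0 * (1 + x)) ^ 2 - 4 * (1 - x) * x * 0 = (1 - x) ^ 2 by ring,
          Real.sqrt_sq h1.le]
        ring
      rwa [hv] at h
    have hn : Tendsto (fun ε : ℝ => 2 * x * ε) (nhds 0) (nhds 0) := by
      have : Continuous (fun ε : ℝ => 2 * x * ε) := by continuity
      simpa using this.tendsto 0
    have := hn.div hd (by positivity)
    simp only [zero_div] at this
    exact (this.congr (fun ε => rfl)).mono_left nhdsWithin_le_nhds
  · intro x hx1
    have hx0 : (0:ℝ) < x := by linarith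
    have h1 : (1:ℝ) - x < 0 := by linarith
    have heq : ∀ ε ∈ Set.Ioi (0:ℝ), GK ε x =
        (1 - x + ε * (1 + x) - Real.sqrt ((1 - x + ε * (1 + x)) ^ 2 - 4 * (1 - x) * x * ε))
          / (2 * (1 - x)) := by
      intro ε hε
      simp only [Set.mem_Ioi] at hε
      set A := 1 - x + ε * (1 + x) with hA
      have hrad : A ^ 2 < A ^ 2 - 4 * (1 - x) * x * ε := by nlinarith [mul_pos hx0 hε]
      have hS : Real.sqrt (A ^ 2 - 4 * (1 - x) * x * ε) > |A| := by
        calc |A| = Real.sqrt (A ^ 2) := (Real.sqrt_sq_eq_abs A).symm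
        _ < _ := Real.sqrt_lt_sqrt (sq_nonneg A) hrad
      have hAS : 0 < A + Real.sqrt (A ^ 2 - 4 * (1 - x) * x * ε) := by
        have := neg_abs_le A; linarith
      have hS2 : (Real.sqrt (A ^ 2 - 4 * (1 - x) * x * ε)) ^ 2
          = A ^ 2 - 4 * (1 - x) * x * ε := by
        apply Real.sq_sqrt; nlinarith [sq_nonneg A]
      rw [GK, div_eq_div_iff hAS.ne' (by nlinarith : (2 * (1 - x)) ≠ 0)]
      nlinarith [hS2]
    have hcd : Continuous (fun ε : ℝ =>
        (1 - x + ε * (1 + x) - Real.sqrt ((1 - x + ε * (1 + x)) ^ 2 - 4 * (1 - x) * x * ε))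
          / (2 * (1 - x))) := by
      apply Continuous.div_const
      apply Continuous.sub (by continuity)
      exact Real.continuous_sqrt.comp (by continuity)
    have hlim : Tendsto (fun ε : ℝ =>
        (1 - x + ε * (1 + x) - Real.sqrt ((1 - x + ε * (1 + x)) ^ 2 - 4 * (1 - x) * x * ε))
          / (2 * (1 - x))) (nhds 0) (nhds 1) := by
      have h := hcd.tendsto 0
      have hv : (1 - x + 0 * (1 + x) - Real.sqrt ((1 - x + 0 * (1 + x)) ^ 2 - 4 * (1 - x) * x * 0))
          / (2 * (1 - x)) = 1 := by
        rw [show (1 - x + 0 * (1 + x)) ^ 2 - 4 * (1 - x) * x * 0 = (x - 1) ^ 2 by ring,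
          Real.sqrt_sq (by linarith : (0:ℝ) ≤ x - 1)]
        rw [div_eq_one_iff_eq (by nlinarith : (2 * (1 - x)) ≠ 0)]
        ring
      rwa [hv] at h
    refine Tendsto.congr' ?_ (hlim.mono_left nhdsWithin_le_nhds)
    filter_upwards [self_mem_nhdsWithin] with ε hε
    exact (heq ε hε).symm
end

section
/- Let α ∈ (0,1), β > 0, φ₀ > 0, k ∈ ℕ with k ≥ 1, and c ∈ ℝ. Consider the planar system ẏ = F(y,δ) + δ^k c + (1 − F(y,δ)) y, δ̇ = (1/k) δ (1 − F(y,δ)), where F(y,δ) = −αy − (β/α) φ₀ δ^{k(k+1)}. Then the lines δ = 0 is invariant; (y,δ) = (0,0) is an equilibrium whose Jacobian has eigenvalues 1−α > 0 and 1/k > 0, hence a hyperbolic unstable node; and (y,δ) = (−(1−α)/α, 0) is an equilibrium whose Jacobian has eigenvalues −(1−α) < 0 and α/k > 0, hence a hyperbolic saddle whose stable eigendirection is tangent to the invariant axis δ = 0. -/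
noncomputable def Tmat (a b d : ℝ) : ℝ × ℝ →L[ℝ] ℝ × ℝ :=
  (a • ContinuousLinearMap.fst ℝ ℝ ℝ + b • ContinuousLinearMap.snd ℝ ℝ ℝ).prod
    (d • ContinuousLinearMap.snd ℝ ℝ ℝ)

lemma Tmat_apply (a b d : ℝ) (p : ℝ × ℝ) :
    Tmat a b d p = (a * p.1 + b * p.2, d * p.2) := by
  simp [Tmat, smul_eq_mul]

lemma Tmat_mul (a b d a' b' d' : ℝ) :
    Tmat a b d * Tmat a' b' d' = Tmat (a*a') (a*b' + b*d') (d*d') := by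
  ext p <;> simp [ContinuousLinearMap.mul_apply, Tmat_apply] <;> ring

lemma Tmat_one : Tmat 1 0 1 = 1 := by
  ext p <;> simp [Tmat_apply, ContinuousLinearMap.one_apply]

lemma isUnit_Tmat (a b d : ℝ) (ha : a ≠ 0) (hd : d ≠ 0) : IsUnit (Tmat a b d) := by
  have h1 : Tmat a b d * Tmat a⁻¹ (-b/(a*d)) d⁻¹ = 1 := by
    rw [Tmat_mul, mul_inv_cancel₀ ha, mul_inv_cancel₀ hd]
    rw [show a * (-b/(a*d)) + b * d⁻¹ = 0 by field_simp; ring]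
    exact Tmat_one
  have h2 : Tmat a⁻¹ (-b/(a*d)) d⁻¹ * Tmat a b d = 1 := by
    rw [Tmat_mul, inv_mul_cancel₀ ha, inv_mul_cancel₀ hd]
    rw [show a⁻¹ * b + -b/(a*d) * d = 0 by field_simp; ring]
    exact Tmat_one
  exact ⟨⟨_, _, h1, h2⟩, rfl⟩

lemma not_isUnit_Tmat (a b d : ℝ) (h : a = 0 ∨ d = 0) : ¬ IsUnit (Tmat a b d) := by
  rintro ⟨u, hu⟩
  rcases h with h | h
  · -- not injective: kernel vector
    have hinj : Function.Injective (Tmat a b d) := by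
      intro x y hxy
      have := congrArg (fun T : ℝ × ℝ →L[ℝ] ℝ × ℝ => T x) (u.inv_mul)
      have h1 : u.inv (Tmat a b d x) = x := by
        simpa [ContinuousLinearMap.mul_apply, hu, ContinuousLinearMap.one_apply] using this
      have h2 : u.inv (Tmat a b d y) = y := by
        simpa [ContinuousLinearMap.mul_apply, hu, ContinuousLinearMap.one_apply] using
          congrArg (fun T : ℝ × ℝ →L[ℝ] ℝ × ℝ => T y) (u.inv_mul)
      rw [← h1, ← h2, hxy]
    have hv : Tmat a b d (1, 0) = Tmat a b d 0 := by
      simp [Tmat_apply, h]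
    have := hinj hv
    simp [Prod.ext_iff] at this
  · -- not surjective
    have hsurj : Function.Surjective (Tmat a b d) := by
      intro z
      refine ⟨u.inv z, ?_⟩
      have := congrArg (fun T : ℝ × ℝ →L[ℝ] ℝ × ℝ => T z) (u.mul_inv)
      simpa [ContinuousLinearMap.mul_apply, hu, ContinuousLinearMap.one_apply] using this
    obtain ⟨p, hp⟩ := hsurj (0, 1)
    rw [Tmat_apply, h] at hp
    have := congrArg Prod.snd hp
    simp at this

lemma spectrum_Tmat (a b d : ℝ) : spectrum ℝ (Tmat a b d) = {a, d} := by
  ext lam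
  rw [spectrum.mem_iff]
  have heq : (algebraMap ℝ (ℝ × ℝ →L[ℝ] ℝ × ℝ)) lam - Tmat a b d
      = Tmat (lam - a) (-b) (lam - d) := by
    ext p <;>
      simp [Tmat_apply, Algebra.algebraMap_eq_smul_one, ContinuousLinearMap.sub_apply,
        ContinuousLinearMap.smul_apply, ContinuousLinearMap.one_apply, Prod.smul_def,
        smul_eq_mul] <;> ring
  rw [heq]
  simp only [Set.mem_insert_iff, Set.mem_singleton_iff]
  constructor
  · intro h
    by_contra hc
    push_neg at hc
    exact h (isUnit_Tmat _ _ _ (sub_ne_zero.mpr (Ne.symm (by tauto)))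
      (sub_ne_zero.mpr (Ne.symm (by tauto))))
  · intro h
    apply not_isUnit_Tmat
    rcases h with h | h
    · exact Or.inl (by rw [h]; ring)
    · exact Or.inr (by rw [h]; ring)

lemma hasFDerivAt_VSL (α β φ₀ c : ℝ) (k : ℕ) (hk : 1 ≤ k) (y₀ : ℝ) :
    HasFDerivAt (fun p : ℝ × ℝ =>
      ((-α * p.1 - β / α * φ₀ * p.2 ^ (k*(k+1))) + p.2 ^ k * c
        + (1 - (-α * p.1 - β / α * φ₀ * p.2 ^ (k*(k+1)))) * p.1,
       (1 / (k:ℝ)) * p.2 * (1 - (-α * p.1 - β / α * φ₀ * p.2 ^ (k*(k+1))))))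
      (Tmat (1 - α + 2*α*y₀) ((k:ℝ) * (0:ℝ)^(k-1) * c) ((1/(k:ℝ))*(1+α*y₀))) (y₀, 0) := by
  have h1 : HasFDerivAt (fun p : ℝ × ℝ => p.1) (ContinuousLinearMap.fst ℝ ℝ ℝ) (y₀, 0) :=
    hasFDerivAt_fst
  have h2 : HasFDerivAt (fun p : ℝ × ℝ => p.2) (ContinuousLinearMap.snd ℝ ℝ ℝ) (y₀, 0) :=
    hasFDerivAt_snd
  have hF := (h1.const_mul (-α)).sub (((hasDerivAt_pow (k*(k+1)) ((0:ℝ))).comp_hasFDerivAt (y₀,0) h2).const_mul (β / α * φ₀))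
  have hδk := ((hasDerivAt_pow k ((0:ℝ))).comp_hasFDerivAt (y₀,0) h2).mul_const c
  have hOneSub := hF.const_sub 1
  have hM := hOneSub.mul h1
  have hV2 := (h2.const_mul (1 / (k:ℝ))).mul hOneSub
  have hV := ((hF.add hδk).add hM).prodMk hV2
  have hm0 : (0:ℝ) ^ (k*(k+1) - 1) = 0 := by
    apply zero_pow
    have : 2 ≤ k * (k + 1) := by nlinarith
    omega
  have hk0 : (0:ℝ) ^ k = 0 := zero_pow (by omega)
  have hk0' : (0:ℝ) ^ (k*(k+1)) = 0 := zero_pow (by positivity)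
  refine hV.congr_fderiv ?_
  symm
  ext p <;>
    simp [Tmat_apply, hm0, hk0, hk0', ContinuousLinearMap.smul_apply, ContinuousLinearMap.add_apply,
      ContinuousLinearMap.sub_apply, ContinuousLinearMap.neg_apply, smul_eq_mul,
      ContinuousLinearMap.coe_smul', Pi.smul_apply] <;> ring_nf <;>
      simp [pow_succ, zero_pow, show k ≠ 0 by omega, show k^2 ≠ 0 by positivity]

open Filter Topology

/-- The `ρ₁ = 0` subsystem on the blow-up sphere `S^L` in chart `r̄ = 1`:
`ẏ = F + δ^k c + (1 − F)y`, `δ̇ = (1/k)δ(1 − F)` with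
`F(y,δ) = −αy − (β/α)φ₀δ^{k(k+1)}`. The line `δ = 0` is invariant; `(0,0)` is a
hyperbolic unstable node (eigenvalues `1−α > 0` and `1/k > 0`); and
`(−(1−α)/α, 0)` is a hyperbolic saddle (eigenvalues `−(1−α) < 0` and `α/k > 0`)
whose stable eigendirection `(1,0)` is tangent to the invariant axis `δ = 0`. -/
theorem sphere_SL_chart_rbar1_nodes
    (α β φ₀ c : ℝ) (k : ℕ)
    (hα : 0 < α) (hα1 : α < 1) (hβ : 0 < β) (hφ₀ : 0 < φ₀) (hk : 1 ≤ k) :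
    let F : ℝ → ℝ → ℝ := fun y δ => -α * y - β / α * φ₀ * δ ^ (k * (k + 1))
    let V : ℝ × ℝ → ℝ × ℝ := fun p =>
      (F p.1 p.2 + p.2 ^ k * c + (1 - F p.1 p.2) * p.1,
       (1 / (k : ℝ)) * p.2 * (1 - F p.1 p.2))
    (∀ y : ℝ, (V (y, 0)).2 = 0) ∧
    (V (0, 0) = 0 ∧
      ∃ L : ℝ × ℝ →L[ℝ] ℝ × ℝ, HasFDerivAt V L (0, 0) ∧
        spectrum ℝ L = {1 - α, 1 / (k : ℝ)} ∧
        0 < 1 - α ∧ 0 < 1 / (k : ℝ)) ∧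
    (V (-(1 - α) / α, 0) = 0 ∧
      ∃ L : ℝ × ℝ →L[ℝ] ℝ × ℝ, HasFDerivAt V L (-(1 - α) / α, 0) ∧
        spectrum ℝ L = {-(1 - α), α / (k : ℝ)} ∧
        -(1 - α) < 0 ∧ 0 < α / (k : ℝ) ∧
        L (1, 0) = (-(1 - α)) • ((1 : ℝ), (0 : ℝ))) := by
  intro F V
  have hk0 : (0:ℝ) ^ k = 0 := zero_pow (by omega)
  have hm0 : (0:ℝ) ^ (k*(k+1)) = 0 := zero_pow (by positivity)
  have hkpos : (0:ℝ) < (k:ℝ) := by exact_mod_cast hk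
  have hαne : α ≠ 0 := ne_of_gt hα
  refine ⟨?_, ⟨?_, ?_⟩, ⟨?_, ?_⟩⟩
  · intro y; simp [V]
  · simp [V, F, hk0, hm0]
  · refine ⟨Tmat (1 - α + 2*α*0) ((k:ℝ) * (0:ℝ)^(k-1) * c) ((1/(k:ℝ))*(1+α*0)), ?_, ?_, ?_, ?_⟩
    · exact hasFDerivAt_VSL α β φ₀ c k hk 0
    · rw [spectrum_Tmat]; norm_num
    · linarith
    · positivity
  · simp only [V, F, hk0, hm0, mul_zero, zero_mul, add_zero, sub_zero, Prod.mk_eq_zero]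
    refine ⟨?_, by simp⟩
    field_simp
    ring
  · have ha : 1 - α + 2*α*(-(1 - α)/α) = -(1 - α) := by field_simp; ring
    have hd : (1/(k:ℝ))*(1+α*(-(1 - α)/α)) = α/(k:ℝ) := by
      rw [show α*(-(1 - α)/α) = -(1-α) by field_simp]
      field_simp
      ring
    refine ⟨Tmat (-(1 - α)) ((k:ℝ) * (0:ℝ)^(k-1) * c) (α/(k:ℝ)), ?_, ?_, ?_, ?_, ?_⟩
    · have h := hasFDerivAt_VSL α β φ₀ c k hk (-(1 - α)/α)
      rw [ha, hd] at h
      exact h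
    · rw [spectrum_Tmat]
    · linarith
    · positivity
    · simp [Tmat_apply, Prod.smul_def, smul_eq_mul]
end

section
/- Let α ∈ (0,1), β > 0, φ₀ > 0, k ∈ ℕ with k ≥ 1, and s > 0. Consider the planar system ẏ = F(y,δ) − δ^k s + (1 − F(y,δ)) y, δ̇ = (1/k) δ (1 − F(y,δ)), with F(y,δ) = −αy − (β/α) φ₀ δ^{k(k+1)}. Then the point z = (y,δ) = (−1/α − (β/α²) φ₀ s^{−(k+1)}, s^{−1/k}) is an equilibrium; the Jacobian at z has determinant α and trace α⁻¹ (k β φ₀ s^{−(k+1)} − α(1+α)). Consequently the trace vanishes if and only if s = (k β φ₀ / (α(α+1)))^{1/(k+1)}; for s larger than this value the equilibrium is hyperbolic with both eigenvalues of negative real part (attracting), and for smaller positive s it is hyperbolic with both eigenvalues of positive real part (repelling). -/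
open Filter Topology Matrix

private lemma rpow_pow_aux (s : ℝ) (hs : 0 < s) (k : ℕ) (n : ℕ) :
    (s ^ (-(1:ℝ)/(k:ℝ))) ^ n = s ^ (-(n:ℝ)/(k:ℝ)) := by
  rw [← Real.rpow_natCast (s ^ (-(1:ℝ)/(k:ℝ))) n, ← Real.rpow_mul hs.le]
  ring_nf

private lemma quad_root_re_neg (T d : ℝ) (hT : T < 0) (hd : 0 < d) (μ : ℂ)
    (h : μ ^ 2 - (T:ℂ) * μ + (d:ℂ) = 0) : μ.re < 0 := by
  have hre := congrArg Complex.re h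
  have him := congrArg Complex.im h
  simp [pow_two, Complex.mul_re, Complex.mul_im] at hre him
  have hfac : μ.im * (2 * μ.re - T) = 0 := by linear_combination him
  rcases mul_eq_zero.mp hfac with hy | hy
  · rw [hy] at hre
    nlinarith [sq_nonneg μ.re]
  · nlinarith [hy]

private lemma quad_root_re_pos (T d : ℝ) (hT : 0 < T) (hd : 0 < d) (μ : ℂ)
    (h : μ ^ 2 - (T:ℂ) * μ + (d:ℂ) = 0) : 0 < μ.re := by
  have := quad_root_re_neg (-T) d (by linarith) hd (-μ) (by push_cast; linear_combination h)
  simpa using this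

private lemma spectrum_quad (M : Matrix (Fin 2) (Fin 2) ℝ) (μ : ℂ)
    (h : μ ∈ spectrum ℂ (M.map (Complex.ofReal ·))) :
    μ ^ 2 - (M.trace : ℂ) * μ + (M.det : ℂ) = 0 := by
  rw [spectrum.mem_iff, Matrix.isUnit_iff_isUnit_det, isUnit_iff_ne_zero, not_not] at h
  rw [← h]
  simp [Matrix.det_fin_two, Matrix.trace_fin_two, Matrix.algebraMap_matrix_apply]
  ring

/-- Hopf bifurcation of the interior equilibrium on the sphere `S^L` (chart `r̄ = 1`,
`ρ₁ = 0` subsystem, written with `s = η^L(μ) − η > 0`):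
`z = (−1/α − (β/α²)φ₀ s^{−(k+1)}, s^{−1/k})` is an equilibrium, the Jacobian there has
determinant `α` and trace `α⁻¹(kβφ₀ s^{−(k+1)} − α(1+α))`; the trace vanishes iff
`s = (kβφ₀/(α(α+1)))^{1/(k+1)}`, for larger `s` the equilibrium is hyperbolic attracting
(all eigenvalues of negative real part), for smaller positive `s` hyperbolic repelling. -/
theorem sphere_SL_hopf_bifurcation
    (α β φ₀ s : ℝ) (k : ℕ)
    (hα : 0 < α) (hα1 : α < 1) (hβ : 0 < β) (hφ₀ : 0 < φ₀) (hk : 1 ≤ k) (hs : 0 < s) :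
    let F : ℝ → ℝ → ℝ := fun y δ => -α * y - β / α * φ₀ * δ ^ (k * (k + 1))
    let V : (Fin 2 → ℝ) → (Fin 2 → ℝ) := fun p =>
      ![F (p 0) (p 1) - (p 1) ^ k * s + (1 - F (p 0) (p 1)) * p 0,
        (1 / (k : ℝ)) * p 1 * (1 - F (p 0) (p 1))]
    let z : Fin 2 → ℝ :=
      ![-(1 / α) - β / α ^ 2 * φ₀ * (s ^ (k + 1))⁻¹, s ^ (-(1 : ℝ) / (k : ℝ))]
    let sH : ℝ := (k * β * φ₀ / (α * (α + 1))) ^ ((1 : ℝ) / ((k : ℝ) + 1))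
    V z = 0 ∧
    ∃ J : Matrix (Fin 2) (Fin 2) ℝ,
      HasFDerivAt V (LinearMap.toContinuousLinearMap (Matrix.mulVecLin J)) z ∧
      J.det = α ∧
      J.trace = α⁻¹ * ((k : ℝ) * β * φ₀ * (s ^ (k + 1))⁻¹ - α * (1 + α)) ∧
      (J.trace = 0 ↔ s = sH) ∧
      (sH < s → ∀ μ ∈ spectrum ℂ (J.map (Complex.ofReal ·)), μ.re < 0) ∧
      (s < sH → ∀ μ ∈ spectrum ℂ (J.map (Complex.ofReal ·)), 0 < μ.re) := by
  intro F V z sH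
  have hk0 : (k:ℝ) ≠ 0 := Nat.cast_ne_zero.mpr (by omega)
  have hkpos : (0:ℝ) < k := Nat.cast_pos.mpr (by omega)
  have hα' : α ≠ 0 := hα.ne'
  have hspow : (0:ℝ) < s ^ (k+1) := pow_pos hs _
  have hz0 : z 0 = -(1 / α) - β / α ^ 2 * φ₀ * (s ^ (k + 1))⁻¹ := by simp [z]
  have hz1 : z 1 = s ^ (-(1 : ℝ) / (k : ℝ)) := by simp [z]
  have hδk : (z 1) ^ k = s⁻¹ := by
    rw [hz1, rpow_pow_aux s hs k k, show -(k:ℝ)/(k:ℝ) = -1 by field_simp,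
      Real.rpow_neg_one]
  have hδN : (z 1) ^ (k*(k+1)) = (s ^ (k+1))⁻¹ := by
    rw [hz1, rpow_pow_aux s hs k (k*(k+1)),
      show -((k*(k+1) : ℕ):ℝ)/(k:ℝ) = -(((k+1:ℕ)):ℝ) by push_cast; field_simp,
      Real.rpow_neg hs.le, Real.rpow_natCast]
  have hδδk : z 1 * (z 1) ^ (k-1) = s⁻¹ := by
    rw [← pow_succ', show k - 1 + 1 = k by omega, hδk]
  have hkk1 : 1 ≤ k * (k+1) := Nat.one_le_iff_ne_zero.mpr (by positivity)
  have hδδN : z 1 * (z 1) ^ (k*(k+1)-1) = (s ^ (k+1))⁻¹ := by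
    rw [← pow_succ', Nat.sub_add_cancel hkk1, hδN]
  have hss : s * s⁻¹ = 1 := mul_inv_cancel₀ hs.ne'
  have hkk : (k:ℝ) * (k:ℝ)⁻¹ = 1 := mul_inv_cancel₀ hk0
  have haa : α * α⁻¹ = 1 := mul_inv_cancel₀ hα'
  have hFz : -α * z 0 - β / α * φ₀ * (z 1) ^ (k*(k+1)) = 1 := by
    rw [hδN, hz0]
    field_simp
    ring
  -- the value z is an equilibrium
  have hVz : V z = 0 := by
    funext i
    fin_cases i <;>
      simp only [V, F, Matrix.cons_val_zero, Matrix.cons_val_one, Matrix.head_cons,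
        Pi.zero_apply, Fin.zero_eta, Fin.mk_one]
    · rw [hδk]
      linear_combination (1 - z 0) * hFz - hss
    · linear_combination (-(1/(k:ℝ)) * z 1) * hFz
  -- determinant
  have hdet : Matrix.det !![-α + α * z 0,
      β / α * φ₀ * ((k*(k+1):ℕ):ℝ) * (z 1) ^ (k*(k+1)-1) * (z 0 - 1) - (k:ℝ) * (z 1) ^ (k-1) * s;
      1 / (k:ℝ) * z 1 * α,
      1 / (k:ℝ) * z 1 * (β / α * φ₀ * ((k*(k+1):ℕ):ℝ) * (z 1) ^ (k*(k+1)-1))] = α := by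
    rw [Matrix.det_fin_two_of]
    linear_combination (α * s * (z 1 * z 1 ^ (k-1))) * hkk + (α * s) * hδδk + α * hss
  -- trace
  have htr : Matrix.trace !![-α + α * z 0,
      β / α * φ₀ * ((k*(k+1):ℕ):ℝ) * (z 1) ^ (k*(k+1)-1) * (z 0 - 1) - (k:ℝ) * (z 1) ^ (k-1) * s;
      1 / (k:ℝ) * z 1 * α,
      1 / (k:ℝ) * z 1 * (β / α * φ₀ * ((k*(k+1):ℕ):ℝ) * (z 1) ^ (k*(k+1)-1))] =
      α⁻¹ * ((k : ℝ) * β * φ₀ * (s ^ (k + 1))⁻¹ - α * (1 + α)) := by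
    rw [Matrix.trace_fin_two_of, hz0]
    have hcast : ((k*(k+1):ℕ):ℝ) = (k:ℝ) * ((k:ℝ)+1) := by push_cast; ring
    rw [hcast]
    linear_combination ((1/(k:ℝ)) * (β/α*φ₀) * ((k:ℝ)*((k:ℝ)+1))) * hδδN + α * haa +
      (β * α⁻¹ * φ₀ * (s^(k+1))⁻¹ * ((k:ℝ)+1)) * hkk -
      (β * φ₀ * (s^(k+1))⁻¹ * α⁻¹) * haa
  -- auxiliary facts about sH
  have hXpos : (0:ℝ) < (k:ℝ)*β*φ₀/(α*(α+1)) :=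
    div_pos (mul_pos (mul_pos hkpos hβ) hφ₀) (mul_pos hα (by linarith))
  have hsHpos : 0 < sH := Real.rpow_pos_of_pos hXpos _
  have hexp : (1:ℝ)/((k:ℝ)+1) = (((k+1:ℕ)):ℝ)⁻¹ := by push_cast; ring
  have hsH_pow : sH ^ (k+1) = (k:ℝ)*β*φ₀/(α*(α+1)) := by
    show ((k * β * φ₀ / (α * (α + 1))) ^ ((1:ℝ)/((k:ℝ)+1))) ^ (k+1) = _
    rw [hexp]
    exact Real.rpow_inv_natCast_pow hXpos.le (by omega)
  have hiff : s ^ (k+1) = (k:ℝ)*β*φ₀/(α*(α+1)) ↔ s = sH := by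
    constructor
    · intro h
      have h2 := Real.pow_rpow_inv_natCast hs.le (show k+1 ≠ 0 by omega)
      rw [← h2, h]
      show _ = (k * β * φ₀ / (α * (α + 1))) ^ ((1:ℝ)/((k:ℝ)+1))
      rw [hexp]
    · intro h; rw [h, hsH_pow]
  have htr2 : α⁻¹ * ((k : ℝ) * β * φ₀ * (s ^ (k + 1))⁻¹ - α * (1 + α)) =
      (α⁻¹ * (α*(α+1)) * (s^(k+1))⁻¹) * ((k:ℝ)*β*φ₀/(α*(α+1)) - s^(k+1)) := by
    field_simp
    ring
  have hcpos : 0 < α⁻¹ * (α*(α+1)) * (s^(k+1))⁻¹ := by positivity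
  have hTneg : sH < s → α⁻¹ * ((k : ℝ) * β * φ₀ * (s ^ (k + 1))⁻¹ - α * (1 + α)) < 0 := by
    intro hlt
    have hpow : sH^(k+1) < s^(k+1) := pow_lt_pow_left₀ hlt hsHpos.le (by omega)
    rw [hsH_pow] at hpow
    rw [htr2]
    exact mul_neg_of_pos_of_neg hcpos (by linarith)
  have hTpos : s < sH → 0 < α⁻¹ * ((k : ℝ) * β * φ₀ * (s ^ (k + 1))⁻¹ - α * (1 + α)) := by
    intro hlt
    have hpow : s^(k+1) < sH^(k+1) := pow_lt_pow_left₀ hlt hs.le (by omega)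
    rw [hsH_pow] at hpow
    rw [htr2]
    exact mul_pos hcpos (by linarith)
  refine ⟨hVz, !![-α + α * z 0,
      β / α * φ₀ * ((k*(k+1):ℕ):ℝ) * (z 1) ^ (k*(k+1)-1) * (z 0 - 1) - (k:ℝ) * (z 1) ^ (k-1) * s;
      1 / (k:ℝ) * z 1 * α,
      1 / (k:ℝ) * z 1 * (β / α * φ₀ * ((k*(k+1):ℕ):ℝ) * (z 1) ^ (k*(k+1)-1))],
      ?_, hdet, htr, ?_, ?_, ?_⟩
  · -- derivative
    rw [hasFDerivAt_pi']
    have hp0 := hasFDerivAt_apply (𝕜 := ℝ) (0 : Fin 2) z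
    have hp1 := hasFDerivAt_apply (𝕜 := ℝ) (1 : Fin 2) z
    have hpowN : HasFDerivAt (fun p : Fin 2 → ℝ => p 1 ^ (k*(k+1)))
        ((((k*(k+1):ℕ):ℝ) * z 1 ^ (k*(k+1)-1)) • (ContinuousLinearMap.proj 1 :
          (Fin 2 → ℝ) →L[ℝ] ℝ)) z :=
      (hasDerivAt_pow (k*(k+1)) (z 1)).comp_hasFDerivAt z hp1
    have hpowk : HasFDerivAt (fun p : Fin 2 → ℝ => p 1 ^ k)
        (((k:ℝ) * z 1 ^ (k-1)) • (ContinuousLinearMap.proj 1 : (Fin 2 → ℝ) →L[ℝ] ℝ)) z :=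
      (hasDerivAt_pow k (z 1)).comp_hasFDerivAt z hp1
    have hF : HasFDerivAt (fun p : Fin 2 → ℝ => -α * p 0 - β / α * φ₀ * p 1 ^ (k*(k+1)))
        ((-α) • (ContinuousLinearMap.proj 0 : (Fin 2 → ℝ) →L[ℝ] ℝ) -
          (β / α * φ₀) • ((((k*(k+1):ℕ):ℝ) * z 1 ^ (k*(k+1)-1)) •
            (ContinuousLinearMap.proj 1 : (Fin 2 → ℝ) →L[ℝ] ℝ))) z :=
      (hp0.const_mul (-α)).sub (hpowN.const_mul (β / α * φ₀))
    intro i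
    fin_cases i <;>
      simp only [V, F, Matrix.cons_val_zero, Matrix.cons_val_one, Matrix.head_cons,
        Fin.zero_eta, Fin.mk_one]
    · refine HasFDerivAt.congr_fderiv
        ((hF.sub (hpowk.mul_const s)).add ((hF.const_sub 1).mul hp0)) ?_
      ext p
      simp [Matrix.mulVecLin_apply, Matrix.mulVec, dotProduct, Fin.sum_univ_two]
      linear_combination (-(p 0)) * hFz
    · refine HasFDerivAt.congr_fderiv
        ((hp1.const_mul (1/(k:ℝ))).mul (hF.const_sub 1)) ?_
      ext p
      simp [Matrix.mulVecLin_apply, Matrix.mulVec, dotProduct, Fin.sum_univ_two]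
      linear_combination (-(1/(k:ℝ)) * p 1) * hFz
  · -- trace = 0 iff s = sH
    rw [htr, htr2]
    constructor
    · intro h
      rcases mul_eq_zero.mp h with h | h
      · exact absurd h hcpos.ne'
      · exact hiff.mp (by linarith)
    · intro h
      have h2 := hiff.mpr h
      rw [h2]
      ring
  · -- attracting
    intro hlt μ hμ
    have hquad := spectrum_quad _ μ hμ
    rw [hdet, htr] at hquad
    exact quad_root_re_neg _ α (hTneg hlt) hα μ hquad
  · -- repelling
    intro hlt μ hμ
    have hquad := spectrum_quad _ μ hμ
    rw [hdet, htr] at hquad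
    exact quad_root_re_pos _ α (hTpos hlt) hα μ hquad
end

section
/- Let α ∈ (0,1), β > 0, φ₀ > 0, k ∈ ℕ with k ≥ 1, and c ∈ ℝ. Consider the planar system ṙ = −r(r^{k+1} − F(y)), ẏ = r^{k+1}(F(y) + r^k c) − k y (r^{k+1} − F(y)), where F(y) = −αy − (β/α)φ₀. Then (r,y) = (0,0) is an equilibrium whose Jacobian has eigenvalues −(β/α)φ₀ < 0 and −k(β/α)φ₀ < 0, hence a hyperbolic stable node; and (r,y) = (0, −β φ₀/α²) is an equilibrium whose Jacobian has eigenvalues 0 and k β φ₀/α > 0, hence is partially hyperbolic with exactly one (positive) nonzero eigenvalue. -/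
open Filter Topology Matrix


lemma aux_deriv (α β φ₀ c y₀ : ℝ) (k : ℕ) (hk : 1 ≤ k) :
    HasFDerivAt (fun p : Fin 2 → ℝ =>
      ![-(p 0) * ((p 0) ^ (k + 1) - (-α * p 1 - β / α * φ₀)),
        (p 0) ^ (k + 1) * ((-α * p 1 - β / α * φ₀) + (p 0) ^ k * c)
          - (k : ℝ) * p 1 * ((p 0) ^ (k + 1) - (-α * p 1 - β / α * φ₀))])
      (LinearMap.toContinuousLinearMap
        (Matrix.mulVecLin
          (!![-α * y₀ - β / α * φ₀, 0;
              0, (k : ℝ) * (-α * y₀ - β / α * φ₀) - (k : ℝ) * α * y₀])))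
      ![0, y₀] := by
  have hk0 : k ≠ 0 := by omega
  have hx : HasFDerivAt (fun p : Fin 2 → ℝ => p 0)
      (ContinuousLinearMap.proj 0 : (Fin 2 → ℝ) →L[ℝ] ℝ) ![0, y₀] := hasFDerivAt_apply 0 ![0, y₀]
  have hy : HasFDerivAt (fun p : Fin 2 → ℝ => p 1)
      (ContinuousLinearMap.proj 1 : (Fin 2 → ℝ) →L[ℝ] ℝ) ![0, y₀] := hasFDerivAt_apply 1 ![0, y₀]
  have hF := (hy.const_mul (-α)).sub_const (β / α * φ₀)
  have h1 : HasFDerivAt (fun p : Fin 2 → ℝ => (p 0) ^ (k + 1))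
      ((((k + 1 : ℕ) : ℝ) * (0:ℝ) ^ k) • (ContinuousLinearMap.proj 0 : (Fin 2 → ℝ) →L[ℝ] ℝ))
      ![0, y₀] := by
    have := (hasDerivAt_pow (k+1) (0:ℝ)).comp_hasFDerivAt_of_eq ![0, y₀] hx (by simp)
    simpa [Function.comp_def] using this
  have h2 : HasFDerivAt (fun p : Fin 2 → ℝ => (p 0) ^ k)
      (((k : ℝ) * (0:ℝ) ^ (k-1)) • (ContinuousLinearMap.proj 0 : (Fin 2 → ℝ) →L[ℝ] ℝ))
      ![0, y₀] := by
    have := (hasDerivAt_pow k (0:ℝ)).comp_hasFDerivAt_of_eq ![0, y₀] hx (by simp)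
    simpa [Function.comp_def] using this
  apply hasFDerivAt_pi''
  intro i
  fin_cases i
  · have := hx.neg.mul (h1.sub hF)
    refine this.congr_fderiv ?_
    ext v
    simp [Matrix.mulVecLin, Matrix.mulVec, dotProduct, Fin.sum_univ_two,
      zero_pow hk0, zero_pow (Nat.succ_ne_zero k)]
    ring
  · have := ((h1.mul (hF.add (h2.mul_const c)))).sub
      ((hy.const_mul (k : ℝ)).mul (h1.sub hF))
    refine this.congr_fderiv ?_
    ext v
    simp [Matrix.mulVecLin, Matrix.mulVec, dotProduct, Fin.sum_univ_two,
      zero_pow hk0, zero_pow (Nat.succ_ne_zero k)]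
    ring

/-- The `ρ₂ = 0` subsystem in chart `δ̄ = 1` on the sphere `S^L`:
`ṙ = −r(r^{k+1} − F(y))`, `ẏ = r^{k+1}(F(y) + r^k c) − ky(r^{k+1} − F(y))` with
`F(y) = −αy − (β/α)φ₀`. Then `q_f^L = (0,0)` is a hyperbolic stable node with Jacobian
`diag(−(β/α)φ₀, −k(β/α)φ₀)`, and `q_r^L = (0, −βφ₀/α²)` is a partially hyperbolic
equilibrium with Jacobian `diag(0, kβφ₀/α)`, i.e. exactly one (positive) nonzero
eigenvalue. -/
theorem sphere_SL_chart_deltabar1_equilibria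
    (α β φ₀ c : ℝ) (k : ℕ)
    (hα : 0 < α) (hα1 : α < 1) (hβ : 0 < β) (hφ₀ : 0 < φ₀) (hk : 1 ≤ k) :
    let F : ℝ → ℝ := fun y => -α * y - β / α * φ₀
    let V : (Fin 2 → ℝ) → (Fin 2 → ℝ) := fun p =>
      ![-(p 0) * ((p 0) ^ (k + 1) - F (p 1)),
        (p 0) ^ (k + 1) * (F (p 1) + (p 0) ^ k * c)
          - (k : ℝ) * p 1 * ((p 0) ^ (k + 1) - F (p 1))]
    (V ![0, 0] = 0 ∧
      HasFDerivAt V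
        (LinearMap.toContinuousLinearMap
          (Matrix.mulVecLin (!![-(β / α) * φ₀, 0; 0, -(k : ℝ) * (β / α) * φ₀])))
        ![0, 0] ∧
      -(β / α) * φ₀ < 0 ∧ -(k : ℝ) * (β / α) * φ₀ < 0) ∧
    (V ![0, -β * φ₀ / α ^ 2] = 0 ∧
      HasFDerivAt V
        (LinearMap.toContinuousLinearMap
          (Matrix.mulVecLin (!![(0 : ℝ), 0; 0, (k : ℝ) * β * φ₀ / α])))
        ![0, -β * φ₀ / α ^ 2] ∧
      0 < (k : ℝ) * β * φ₀ / α) := by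
  intro F V
  have hα' : α ≠ 0 := ne_of_gt hα
  have hk0 : k ≠ 0 := by omega
  have hkpos : (0 : ℝ) < k := by exact_mod_cast Nat.lt_of_lt_of_le Nat.zero_lt_one hk
  have hratio : 0 < β / α * φ₀ := by positivity
  refine ⟨⟨?_, ?_, ?_, ?_⟩, ?_, ?_, ?_⟩
  · funext i
    fin_cases i <;> simp [V, F, zero_pow hk0]
  · have h := aux_deriv α β φ₀ c 0 k hk
    have hM : !![-α * (0:ℝ) - β / α * φ₀, 0;
        0, (k : ℝ) * (-α * 0 - β / α * φ₀) - (k : ℝ) * α * 0]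
        = !![-(β / α) * φ₀, 0; 0, -(k : ℝ) * (β / α) * φ₀] := by
      ext i j
      fin_cases i <;> fin_cases j <;> simp <;> ring
    rw [hM] at h
    exact h
  · nlinarith
  · nlinarith
  · funext i
    fin_cases i
    · simp [V, F, zero_pow hk0]
    · show (0:ℝ) ^ (k + 1) * (F (-β * φ₀ / α ^ 2) + (0:ℝ) ^ k * c)
          - (k : ℝ) * (-β * φ₀ / α ^ 2) * ((0:ℝ) ^ (k + 1) - F (-β * φ₀ / α ^ 2)) = 0
      have hFz : F (-β * φ₀ / α ^ 2) = 0 := by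
        simp only [F]
        field_simp
        ring
      rw [hFz]
      simp [zero_pow hk0]
  · have h := aux_deriv α β φ₀ c (-β * φ₀ / α ^ 2) k hk
    have hM : !![-α * (-β * φ₀ / α ^ 2) - β / α * φ₀, 0;
        0, (k : ℝ) * (-α * (-β * φ₀ / α ^ 2) - β / α * φ₀) - (k : ℝ) * α * (-β * φ₀ / α ^ 2)]
        = !![(0 : ℝ), 0; 0, (k : ℝ) * β * φ₀ / α] := by
      ext i j
      fin_cases i <;> fin_cases j <;> simp <;> field_simp <;> ring
    rw [hM] at h
    exact h
  · positivity
end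

section
/- Let α ∈ (0,1) and set B = −(1−α)/α, so −1/α < B < 0. Define g(y) = y(1 + αy)(αy + 1 − α) and F(y) = −(α/2)(αy + 1)(α(3y − 2) + 1). Then: (i) g(y)·(y + 1/α) > 0 for every y ∈ (−∞, −1/α) ∪ (−1/α, B); (ii) F(−1/α) = 0; (iii) F(y) < 0 for every y < −1/α; (iv) F(y) > 0 for every y ∈ (−1/α, B). -/
/-- The sign conditions of Cherkas' theorem for the Liénard system arising on the
blow-up sphere `S^L`: with `B = −(1−α)/α ∈ (−1/α, 0)`, `g(y) = y(1+αy)(αy+1−α)` and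
`F(y) = −(α/2)(αy+1)(α(3y−2)+1)`, one has `g(y)(y+1/α) > 0` on
`(−∞,−1/α) ∪ (−1/α,B)`, `F(−1/α) = 0`, `F < 0` on `(−∞,−1/α)` and `F > 0` on
`(−1/α, B)`. -/
theorem cherkas_sign_conditions (α : ℝ) (hα : 0 < α) (hα1 : α < 1) :
    (-(1 / α) < -(1 - α) / α ∧ -(1 - α) / α < 0) ∧
    (∀ y : ℝ, (y < -(1 / α) ∨ (-(1 / α) < y ∧ y < -(1 - α) / α)) →
      0 < y * (1 + α * y) * (α * y + 1 - α) * (y + 1 / α)) ∧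
    (-(α / 2) * (α * (-(1 / α)) + 1) * (α * (3 * (-(1 / α)) - 2) + 1) = 0) ∧
    (∀ y : ℝ, y < -(1 / α) →
      -(α / 2) * (α * y + 1) * (α * (3 * y - 2) + 1) < 0) ∧
    (∀ y : ℝ, -(1 / α) < y → y < -(1 - α) / α →
      0 < -(α / 2) * (α * y + 1) * (α * (3 * y - 2) + 1)) := by
  have hαne : α ≠ 0 := ne_of_gt hα
  have key : (1/α) * α = 1 := by field_simp
  refine ⟨⟨?_, ?_⟩, ?_, ?_, ?_, ?_⟩
  · rw [neg_div, neg_lt_neg_iff, div_lt_div_iff₀ hα hα]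
    nlinarith
  · apply div_neg_of_neg_of_pos <;> linarith
  · intro y hy
    rcases hy with h | ⟨h1, h2⟩
    · have h' : α * y + 1 < 0 := by
        have : y * α < -(1/α) * α := by nlinarith
        nlinarith [key]
      have hy0 : y < 0 := by nlinarith
      have h3 : α * y + 1 - α < 0 := by linarith
      have h4 : y + 1 / α < 0 := by linarith
      have := mul_pos (mul_pos (mul_pos_of_neg_of_neg hy0 (show 1 + α*y < 0 by linarith)) (neg_pos.mpr h3) ) (neg_pos.mpr h4)
      nlinarith [this]
    · have h1' : α * y + 1 > 0 := by
        have : -(1/α) * α < y * α := by nlinarith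
        nlinarith [key]
      have h2' : α * y + 1 - α < 0 := by
        have : y * α < (-(1 - α) / α) * α := by nlinarith
        rw [div_mul_cancel₀] at this
        · linarith
        · exact hαne
      have hy0 : y < 0 := by nlinarith
      have h4 : 0 < y + 1 / α := by
        have : -(1/α) * α < y * α := by nlinarith
        nlinarith [key, mul_pos hα (show 0 < α*y+1 by linarith)]
      nlinarith [mul_pos (mul_pos_of_neg_of_neg (mul_neg_of_neg_of_pos hy0 (by linarith : (0:ℝ) < 1 + α*y)) h2') h4]
  · field_simp
    ring
  · intro y h
    have h' : α * y + 1 < 0 := by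
      have : y * α < -(1/α) * α := by nlinarith
      rw [neg_mul, one_div, inv_mul_cancel₀ hαne] at this
      linarith
    have h3 : α * (3*y - 2) + 1 < 0 := by nlinarith
    nlinarith [mul_pos_of_neg_of_neg h' h3, mul_pos hα (mul_pos_of_neg_of_neg h' h3)]
  · intro y h1 h2
    have h1' : 0 < α * y + 1 := by
      have : -(1/α) * α < y * α := by nlinarith
      rw [neg_mul, one_div, inv_mul_cancel₀ hαne] at this
      linarith
    have h2' : α * y + 1 < α := by
      have : y * α < (-(1 - α) / α) * α := by nlinarith
      rw [div_mul_cancel₀ _ hαne] at this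
      linarith
    have h3 : α * (3*y - 2) + 1 < 0 := by nlinarith
    nlinarith [mul_neg_of_pos_of_neg h1' h3, mul_pos hα (neg_pos.mpr (mul_neg_of_pos_of_neg h1' h3))]
end

section
/- Let k ∈ ℕ with k ≥ 1, α ∈ (0,1), β > 0, φ₀ > 0 and s > 0, and set δ₀ = (α²/(βφ₀))^{1/(k(k+1))}. For each δ ∈ [0, δ₀] there exists a unique r = N(δ) ≥ 0 satisfying r^{k+1}(1 − α + (β/α)φ₀ δ^{k(k+1)} + r^k δ^k s) = α − (β/α)φ₀ δ^{k(k+1)}; moreover N(δ) > 0 for δ ∈ [0, δ₀), N(δ₀) = 0, and N is strictly decreasing on [0, δ₀]. -/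
lemma r4_aux_mono (k : ℕ) (A c : ℝ) (hA : 0 < A) (hc : 0 ≤ c) :
    ∀ x y : ℝ, 0 ≤ x → x < y →
      A * x ^ (k + 1) + c * x ^ (2 * k + 1) < A * y ^ (k + 1) + c * y ^ (2 * k + 1) := by
  intro x y hx hxy
  have h1 : x ^ (k + 1) < y ^ (k + 1) := pow_lt_pow_left₀ hxy hx (by omega)
  have h2 : x ^ (2 * k + 1) ≤ y ^ (2 * k + 1) := pow_le_pow_left₀ hx hxy.le _
  have := mul_le_mul_of_nonneg_left h2 hc
  nlinarith

lemma r4_aux_mono' (k : ℕ) (A c : ℝ) (hA : 0 < A) (hc : 0 ≤ c) :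
    ∀ x y : ℝ, 0 ≤ x → x ≤ y →
      A * x ^ (k + 1) + c * x ^ (2 * k + 1) ≤ A * y ^ (k + 1) + c * y ^ (2 * k + 1) := by
  intro x y hx hxy
  rcases eq_or_lt_of_le hxy with rfl | h
  · exact le_rfl
  · exact (r4_aux_mono k A c hA hc x y hx h).le

lemma r4_aux_exu (k : ℕ) (A c F : ℝ) (hA : 0 < A) (hc : 0 ≤ c) (hF : 0 ≤ F) :
    ∃! r : ℝ, 0 ≤ r ∧ A * r ^ (k + 1) + c * r ^ (2 * k + 1) = F := by
  set g : ℝ → ℝ := fun r => A * r ^ (k + 1) + c * r ^ (2 * k + 1) with hg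
  have hcont : Continuous g := by fun_prop
  set R : ℝ := max 1 (F / A) with hR
  have hR1 : (1 : ℝ) ≤ R := le_max_left _ _
  have hgR : F ≤ g R := by
    have h1 : F / A ≤ R := le_max_right _ _
    have h2 : F ≤ A * R := by
      rw [div_le_iff₀ hA] at h1; linarith [h1]
    have h3 : R ≤ R ^ (k + 1) := le_self_pow₀ (by linarith) (by omega)
    have h4 : 0 ≤ c * R ^ (2 * k + 1) := by positivity
    have : A * R ≤ A * R ^ (k + 1) := by nlinarith
    simp only [hg]; nlinarith
  have hg0 : g 0 = 0 := by simp [hg, zero_pow (by omega : k + 1 ≠ 0), zero_pow (by omega : 2 * k + 1 ≠ 0)]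
  obtain ⟨r, hrmem, hr⟩ := intermediate_value_Icc (by linarith : (0:ℝ) ≤ R) hcont.continuousOn
    (by rw [hg0]; exact ⟨hF, hgR⟩)
  refine ⟨r, ⟨hrmem.1, hr⟩, ?_⟩
  rintro y ⟨hy0, hy⟩
  rcases lt_trichotomy y r with h | h | h
  · exact absurd (hy.trans hr.symm) (ne_of_lt (r4_aux_mono k A c hA hc y r hy0 h))
  · exact h
  · exact absurd (hr.trans hy.symm) (ne_of_lt (r4_aux_mono k A c hA hc r y hrmem.1 h))

/-- The nontrivial part of the `r₄`-nullcline is a strictly decreasing graph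
`r = N(δ)` over `δ ∈ [0, δ₀]`, where `δ₀ = (α²/(βφ₀))^{1/(k(k+1))}`: for each
`δ ∈ [0,δ₀]` there is a unique `r ≥ 0` with
`r^{k+1}(1 − α + (β/α)φ₀ δ^{k(k+1)} + r^k δ^k s) = α − (β/α)φ₀ δ^{k(k+1)}`, and
`N > 0` on `[0,δ₀)`, `N(δ₀) = 0`, `N` strictly decreasing on `[0,δ₀]`. -/
theorem r4_nullcline_graph (k : ℕ) (α β φ₀ s : ℝ)
    (hk : 1 ≤ k) (hα : 0 < α) (hα1 : α < 1) (hβ : 0 < β) (hφ₀ : 0 < φ₀) (hs : 0 < s) :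
    let δ₀ : ℝ := (α ^ 2 / (β * φ₀)) ^ ((1 : ℝ) / ((k : ℝ) * ((k : ℝ) + 1)))
    (∀ δ ∈ Set.Icc (0 : ℝ) δ₀, ∃! r : ℝ, 0 ≤ r ∧
      r ^ (k + 1) * (1 - α + β / α * φ₀ * δ ^ (k * (k + 1)) + r ^ k * δ ^ k * s)
        = α - β / α * φ₀ * δ ^ (k * (k + 1))) ∧
    ∃ N : ℝ → ℝ,
      (∀ δ ∈ Set.Icc (0 : ℝ) δ₀, 0 ≤ N δ ∧
        (N δ) ^ (k + 1) * (1 - α + β / α * φ₀ * δ ^ (k * (k + 1)) + (N δ) ^ k * δ ^ k * s)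
          = α - β / α * φ₀ * δ ^ (k * (k + 1))) ∧
      (∀ δ ∈ Set.Ico (0 : ℝ) δ₀, 0 < N δ) ∧
      N δ₀ = 0 ∧
      StrictAntiOn N (Set.Icc 0 δ₀) := by
  intro δ₀
  have hc : (0:ℝ) < α ^ 2 / (β * φ₀) := by positivity
  have hδ₀pos : 0 < δ₀ := Real.rpow_pos_of_pos hc _
  have hkk : ((k : ℝ) * ((k : ℝ) + 1)) ≠ 0 := by positivity
  have hδ₀pow : δ₀ ^ (k * (k + 1)) = α ^ 2 / (β * φ₀) := by
    show ((α ^ 2 / (β * φ₀)) ^ ((1 : ℝ) / ((k : ℝ) * ((k : ℝ) + 1)))) ^ (k * (k + 1)) = _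
    rw [← Real.rpow_natCast (((α ^ 2 / (β * φ₀)) ^ ((1 : ℝ) / ((k : ℝ) * ((k : ℝ) + 1))))),
      ← Real.rpow_mul hc.le]
    have : (1 : ℝ) / ((k : ℝ) * ((k : ℝ) + 1)) * ((k * (k + 1) : ℕ) : ℝ) = 1 := by
      push_cast; field_simp
    rw [this, Real.rpow_one]
  have hαeq : β / α * φ₀ * (α ^ 2 / (β * φ₀)) = α := by field_simp
  -- F and A bounds
  have hF : ∀ δ ∈ Set.Icc (0:ℝ) δ₀, 0 ≤ α - β / α * φ₀ * δ ^ (k * (k + 1)) := by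
    rintro δ ⟨h0, h1⟩
    have h2 : δ ^ (k * (k + 1)) ≤ α ^ 2 / (β * φ₀) := hδ₀pow ▸ pow_le_pow_left₀ h0 h1 _
    have h3 := mul_le_mul_of_nonneg_left h2 (show 0 ≤ β / α * φ₀ by positivity)
    rw [hαeq] at h3; linarith
  have hF' : ∀ δ ∈ Set.Ico (0:ℝ) δ₀, 0 < α - β / α * φ₀ * δ ^ (k * (k + 1)) := by
    rintro δ ⟨h0, h1⟩
    have h2 : δ ^ (k * (k + 1)) < α ^ 2 / (β * φ₀) := hδ₀pow ▸ pow_lt_pow_left₀ h1 h0 (Nat.mul_ne_zero (by omega) (by omega))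
    have h3 := mul_lt_mul_of_pos_left h2 (show 0 < β / α * φ₀ by positivity)
    rw [hαeq] at h3; linarith
  have hA : ∀ δ : ℝ, 0 ≤ δ → 0 < 1 - α + β / α * φ₀ * δ ^ (k * (k + 1)) := by
    intro δ h0
    have : 0 ≤ β / α * φ₀ * δ ^ (k * (k + 1)) := by positivity
    linarith
  have key : ∀ δ r : ℝ,
      r ^ (k + 1) * (1 - α + β / α * φ₀ * δ ^ (k * (k + 1)) + r ^ k * δ ^ k * s)
      = (1 - α + β / α * φ₀ * δ ^ (k * (k + 1))) * r ^ (k + 1) + (δ ^ k * s) * r ^ (2 * k + 1) := by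
    intro δ r; ring
  have hEU : ∀ δ ∈ Set.Icc (0 : ℝ) δ₀, ∃! r : ℝ, 0 ≤ r ∧
      r ^ (k + 1) * (1 - α + β / α * φ₀ * δ ^ (k * (k + 1)) + r ^ k * δ ^ k * s)
        = α - β / α * φ₀ * δ ^ (k * (k + 1)) := by
    intro δ hδ
    obtain ⟨r, hr, hu⟩ := r4_aux_exu k _ (δ ^ k * s) _ (hA δ hδ.1)
      (mul_nonneg (pow_nonneg hδ.1 k) hs.le) (hF δ hδ)
    exact ⟨r, ⟨hr.1, by rw [key]; exact hr.2⟩,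
      fun y hy => hu y ⟨hy.1, by rw [← key]; exact hy.2⟩⟩
  refine ⟨hEU, fun δ => if h : δ ∈ Set.Icc (0:ℝ) δ₀ then (hEU δ h).exists.choose else 0,
    ?_, ?_, ?_, ?_⟩
  · intro δ hδ
    simp only [dif_pos hδ]
    exact (hEU δ hδ).exists.choose_spec
  · intro δ hδ
    have hδ' : δ ∈ Set.Icc (0:ℝ) δ₀ := ⟨hδ.1, hδ.2.le⟩
    simp only [dif_pos hδ']
    obtain ⟨h0, heq⟩ := (hEU δ hδ').exists.choose_spec
    rcases h0.lt_or_eq with h | h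
    · exact h
    · exfalso
      rw [← h, zero_pow (by omega : k + 1 ≠ 0), zero_mul] at heq
      exact absurd heq.symm (ne_of_gt (hF' δ hδ))
  · have hmem : δ₀ ∈ Set.Icc (0:ℝ) δ₀ := ⟨hδ₀pos.le, le_rfl⟩
    simp only [dif_pos hmem]
    refine ((hEU δ₀ hmem).unique (hEU δ₀ hmem).exists.choose_spec ⟨le_rfl, ?_⟩)
    rw [zero_pow (by omega : k + 1 ≠ 0), zero_mul, hδ₀pow, hαeq]; ring
  · intro a ha b hb hab
    simp only [dif_pos ha, dif_pos hb]
    set ra := (hEU a ha).exists.choose with hra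
    set rb := (hEU b hb).exists.choose with hrb
    obtain ⟨ha0, haeq⟩ := (hEU a ha).exists.choose_spec
    obtain ⟨hb0, hbeq⟩ := (hEU b hb).exists.choose_spec
    rw [key] at haeq hbeq
    by_contra hcon
    push_neg at hcon  -- ra ≤ rb
    -- ra > 0
    have hai : a ∈ Set.Ico (0:ℝ) δ₀ := ⟨ha.1, lt_of_lt_of_le hab hb.2⟩
    have hrapos : 0 < ra := by
      rcases ha0.lt_or_eq with h | h
      · exact h
      · exfalso
        rw [← h, zero_pow (by omega : k + 1 ≠ 0), zero_pow (by omega : 2*k + 1 ≠ 0),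
          mul_zero, mul_zero, add_zero] at haeq
        exact absurd haeq.symm (ne_of_gt (hF' a hai))
    have hpow : a ^ (k * (k + 1)) < b ^ (k * (k + 1)) := pow_lt_pow_left₀ hab ha.1 (Nat.mul_ne_zero (by omega) (by omega))
    have hAab : 1 - α + β / α * φ₀ * a ^ (k * (k + 1)) < 1 - α + β / α * φ₀ * b ^ (k * (k + 1)) := by
      have := mul_lt_mul_of_pos_left hpow (show 0 < β / α * φ₀ by positivity)
      linarith
    have hcab : a ^ k * s ≤ b ^ k * s :=
      mul_le_mul_of_nonneg_right (pow_le_pow_left₀ ha.1 hab.le k) hs.le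
    -- g_b(rb) ≥ g_b(ra)
    have h1 : (1 - α + β / α * φ₀ * b ^ (k * (k + 1))) * ra ^ (k + 1) + (b ^ k * s) * ra ^ (2*k+1)
        ≤ (1 - α + β / α * φ₀ * b ^ (k * (k + 1))) * rb ^ (k + 1) + (b ^ k * s) * rb ^ (2*k+1) :=
      r4_aux_mono' k _ _ (hA b hb.1) (mul_nonneg (pow_nonneg hb.1 k) hs.le) ra rb ha0 hcon
    -- g_b(ra) > g_a(ra)
    have h2 : (1 - α + β / α * φ₀ * a ^ (k * (k + 1))) * ra ^ (k + 1) + (a ^ k * s) * ra ^ (2*k+1)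
        < (1 - α + β / α * φ₀ * b ^ (k * (k + 1))) * ra ^ (k + 1) + (b ^ k * s) * ra ^ (2*k+1) := by
      have hl := mul_lt_mul_of_pos_right hAab (pow_pos hrapos (k+1))
      have hr := mul_le_mul_of_nonneg_right hcab (pow_nonneg ha0 (2*k+1))
      linarith
    -- F a > F b
    have h3 : α - β / α * φ₀ * b ^ (k * (k + 1)) < α - β / α * φ₀ * a ^ (k * (k + 1)) := by
      have := mul_lt_mul_of_pos_left hpow (show 0 < β / α * φ₀ by positivity)
      linarith
    linarith [haeq, hbeq]
end

section
/- Let k ∈ ℕ with k ≥ 1, α ∈ (0,1), β > 0, φ₀ > 0, set F(δ) = α − (β/α)φ₀ δ^{k(k+1)} and δ₀ = (α²/(βφ₀))^{1/(k(k+1))}, and define R(δ) = δ^{k+1} F(δ) / (1 + F(δ)/k)^{(2k+1)/k} for δ ∈ (0, δ₀]. Then R(δ) > 0 for δ ∈ (0, δ₀), R(δ) → 0 as δ → 0⁺, R(δ₀) = 0, and there exists a unique δ₁ ∈ (0, δ₀) such that R is strictly increasing on (0, δ₁] and strictly decreasing on [δ₁, δ₀] (in particular R has at most one critical point in (0, δ₀)).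 -/
open Filter Topology

lemma quad_aux (K A : ℝ) (hK : 1 ≤ K) (hA : 0 < A) :
    ∃ f₀ : ℝ, 0 < f₀ ∧ f₀ < A ∧
      (∀ f, f₀ < f → f ≤ A → 0 < -f^2 + (K+1)*(K+A)/K*f - K*A) ∧
      (∀ f, 0 ≤ f → f < f₀ → -f^2 + (K+1)*(K+A)/K*f - K*A < 0) := by
  have hK0 : (0:ℝ) < K := by linarith
  set B : ℝ := (K+1)*(K+A) with hB
  have hBpos : 0 < B := by positivity
  have hD : 0 < B^2 - 4*K^3*A := by
    nlinarith [sq_nonneg (B - 2*K*A), mul_pos (mul_pos hK0 hA) (by positivity : (0:ℝ) < K + A)]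
  set d : ℝ := Real.sqrt (B^2 - 4*K^3*A) with hd
  have hd0 : 0 < d := Real.sqrt_pos.mpr hD
  have hd2 : d^2 = B^2 - 4*K^3*A := Real.sq_sqrt hD.le
  set f₀ : ℝ := (B - d)/(2*K) with hf₀
  set f₁ : ℝ := (B + d)/(2*K) with hf₁
  have hfact : ∀ f : ℝ, -f^2 + (K+1)*(K+A)/K*f - K*A = (f - f₀)*(f₁ - f) := by
    intro f
    have e : (f - f₀)*(f₁ - f) = (-(2*K*f - B)^2 + d^2)/(4*K^2) := by
      rw [hf₀, hf₁]; field_simp; ring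
    rw [e, hd2, hB]; field_simp; ring
  have hf₁pos : 0 < f₁ := by positivity
  have hprod : f₀ * f₁ = K * A := by
    have := hfact 0; nlinarith [this]
  have hf₀pos : 0 < f₀ := by
    nlinarith [hprod, hf₁pos, mul_pos hK0 hA]
  have hAv : 0 < (A - f₀)*(f₁ - A) := by
    have h := hfact A
    have h2 : -A^2 + (K+1)*(K+A)/K*A - K*A = A*(K+A)/K := by field_simp; ring
    rw [h2] at h
    rw [← h]; positivity
  have hf₀f₁ : f₀ ≤ f₁ := by
    rw [hf₀, hf₁]; gcongr; linarith
  have hf₀A : f₀ < A := by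
    by_contra h; push_neg at h
    have h1 : 0 ≤ f₁ - A := by linarith
    have h2 : A - f₀ ≤ 0 := by linarith
    nlinarith [hAv]
  have hAf₁ : A < f₁ := by
    by_contra h; push_neg at h
    have h1 : f₁ - A ≤ 0 := by linarith
    nlinarith [hAv, hf₀A]
  refine ⟨f₀, hf₀pos, hf₀A, ?_, ?_⟩
  · intro f h1 h2
    rw [hfact]
    have : f < f₁ := by linarith
    nlinarith
  · intro f h1 h2
    rw [hfact]
    have : f < f₁ := by linarith
    nlinarith

/-- Unimodality of the right-hand side `R(δ) = δ^{k+1}F(δ)/(1 + F(δ)/k)^{(2k+1)/k}` of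
the fold equation for the `δ₄`-nullcline, where `F(δ) = α − (β/α)φ₀ δ^{k(k+1)}` and
`δ₀ = (α²/(βφ₀))^{1/(k(k+1))}` is the unique positive zero of `F`: `R > 0` on `(0,δ₀)`,
`R → 0` as `δ → 0⁺`, `R(δ₀) = 0`, and there is a unique `δ₁ ∈ (0,δ₀)` such that `R` is
strictly increasing on `(0,δ₁]` and strictly decreasing on `[δ₁,δ₀]`. -/
theorem fold_equation_unimodal (k : ℕ) (α β φ₀ : ℝ)
    (hk : 1 ≤ k) (hα : 0 < α) (hα1 : α < 1) (hβ : 0 < β) (hφ₀ : 0 < φ₀) :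
    let F : ℝ → ℝ := fun δ => α - β / α * φ₀ * δ ^ (k * (k + 1))
    let δ₀ : ℝ := (α ^ 2 / (β * φ₀)) ^ ((1 : ℝ) / ((k : ℝ) * ((k : ℝ) + 1)))
    let R : ℝ → ℝ := fun δ =>
      δ ^ (k + 1) * F δ / (1 + F δ / (k : ℝ)) ^ ((2 * (k : ℝ) + 1) / (k : ℝ))
    (∀ δ : ℝ, 0 < δ → δ < δ₀ → 0 < R δ) ∧
    Tendsto R (nhdsWithin 0 (Set.Ioi 0)) (nhds 0) ∧
    R δ₀ = 0 ∧
    (∃! δ₁ : ℝ, δ₁ ∈ Set.Ioo 0 δ₀ ∧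
      StrictMonoOn R (Set.Ioc 0 δ₁) ∧ StrictAntiOn R (Set.Icc δ₁ δ₀)) := by
  intro F δ₀ R
  have hK1 : (1:ℝ) ≤ (k:ℝ) := by exact_mod_cast hk
  have hK0 : (0:ℝ) < (k:ℝ) := by linarith
  set K : ℝ := (k:ℝ) with hKdef
  set c : ℝ := β / α * φ₀ with hc
  have hc0 : 0 < c := by positivity
  set m : ℕ := k * (k + 1) with hm
  have hm1 : 1 ≤ m := Nat.one_le_iff_ne_zero.mpr (by positivity)
  have hmK : (m:ℝ) = K * (K + 1) := by rw [hm]; push_cast; ring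
  set p : ℝ := (2*K+1)/K with hp
  have hp1 : 1 ≤ p := by rw [hp, le_div_iff₀ hK0]; linarith
  have hp0 : 0 ≤ p := by linarith
  -- δ₀ facts
  have hA0 : 0 < α^2/(β*φ₀) := by positivity
  have hδ₀pos : 0 < δ₀ := Real.rpow_pos_of_pos hA0 _
  have hδ₀m : c * δ₀ ^ m = α := by
    have h1 : δ₀ ^ (m:ℕ) = α^2/(β*φ₀) := by
      have h2 : δ₀ ^ (m:ℕ) = (α^2/(β*φ₀)) ^ (((1:ℝ)/(K*(K+1))) * (m:ℝ)) := by
        rw [← Real.rpow_natCast δ₀ m, ← Real.rpow_mul hA0.le]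
      rw [h2, hmK]
      have h3 : (1:ℝ)/(K*(K+1)) * (K*(K+1)) = 1 := by field_simp
      rw [h3, Real.rpow_one]
    rw [h1, hc]
    field_simp
  -- F basic facts
  have hFdef : ∀ δ : ℝ, F δ = α - c * δ ^ m := fun δ => rfl
  have hRdef : ∀ δ : ℝ, R δ = δ ^ (k+1) * F δ / (1 + F δ / K) ^ p := fun δ => rfl
  have hFanti : ∀ a b : ℝ, 0 ≤ a → a < b → F b < F a := by
    intro a b ha hab
    simp only [hFdef]
    have : a ^ m < b ^ m := pow_lt_pow_left₀ hab ha (by omega)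
    nlinarith
  have hFδ₀ : F δ₀ = 0 := by rw [hFdef, hδ₀m]; ring
  have hFpos : ∀ δ : ℝ, 0 ≤ δ → δ < δ₀ → 0 < F δ := by
    intro δ hδ hlt
    have := hFanti δ δ₀ hδ hlt
    linarith [hFδ₀ ▸ this]
  have hFle : ∀ δ : ℝ, 0 ≤ δ → F δ ≤ α := by
    intro δ hδ
    rw [hFdef]
    nlinarith [pow_nonneg hδ m]
  have hu : ∀ δ : ℝ, 0 ≤ δ → δ ≤ δ₀ → 0 < 1 + F δ / K := by
    intro δ h1 h2
    have : 0 ≤ F δ := by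
      rcases eq_or_lt_of_le h2 with h | h
      · rw [h, hFδ₀]
      · exact (hFpos δ h1 h).le
    positivity
  have hFc : Continuous F := by
    have h : F = fun δ => α - c * δ ^ m := rfl
    rw [h]; fun_prop
  -- Part 1 : positivity
  have part1 : ∀ δ : ℝ, 0 < δ → δ < δ₀ → 0 < R δ := by
    intro δ h1 h2
    rw [hRdef]
    exact div_pos (mul_pos (pow_pos h1 _) (hFpos δ h1.le h2))
      (Real.rpow_pos_of_pos (hu δ h1.le h2.le) p)
  -- Part 3 : R δ₀ = 0
  have part3 : R δ₀ = 0 := by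
    rw [hRdef, hFδ₀]
    simp
  -- Part 2 : limit
  have hF0 : F 0 = α := by
    rw [hFdef]
    have : (0:ℝ) ^ m = 0 := zero_pow (by omega)
    rw [this]; ring
  have hR0 : R 0 = 0 := by
    rw [hRdef]
    have : (0:ℝ) ^ (k+1) = 0 := zero_pow (by omega)
    rw [this]; simp
  have part2 : Tendsto R (nhdsWithin 0 (Set.Ioi 0)) (nhds 0) := by
    have hden : ContinuousAt (fun δ => (1 + F δ / K) ^ p) 0 := by
      apply ContinuousAt.rpow_const
      · exact (continuous_const.add (hFc.div_const K)).continuousAt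
      · exact Or.inr hp0
    have hdne : (1 + F 0 / K) ^ p ≠ 0 := by
      have : (0:ℝ) < 1 + F 0 / K := hu 0 le_rfl hδ₀pos.le
      exact (Real.rpow_pos_of_pos this p).ne'
    have hcont : ContinuousAt R 0 := by
      have hnum : ContinuousAt (fun δ : ℝ => δ ^ (k+1) * F δ) 0 := by fun_prop
      have := hnum.div hden hdne
      exact this
    have := hcont.continuousWithinAt (s := Set.Ioi 0)
    rw [ContinuousWithinAt, hR0] at this
    exact this
  -- derivative computation
  have hderiv : ∀ δ : ℝ, δ ∈ Set.Ioo (0:ℝ) δ₀ →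
      HasDerivAt R ((1 + F δ/K)^(p-1) * ((K+1) * δ^k *
        (-(F δ)^2 + (K+1)*(K+α)/K * (F δ) - K*α)) / ((1 + F δ/K)^p)^2) δ := by
    intro δ hδ
    obtain ⟨hδ0, hδδ₀⟩ := hδ
    have hfpos := hFpos δ hδ0.le hδδ₀
    have hfle := hFle δ hδ0.le
    have hupos := hu δ hδ0.le hδδ₀.le
    have hF' : HasDerivAt F (-(c * ((m:ℝ) * δ^(m-1)))) δ := by
      have h : F = fun δ => α - c * δ ^ m := rfl
      rw [h]
      exact ((hasDerivAt_pow m δ).const_mul c).const_sub α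
    have hf'eq : -(c * ((m:ℝ) * δ^(m-1))) = -(K*(K+1))*(α - F δ)/δ := by
      have hpow : δ ^ m = δ ^ (m-1) * δ := by
        rw [← pow_succ]; congr 1; omega
      have hFd : F δ = α - c * δ ^ m := hFdef δ
      rw [hFd, show α - (α - c * δ ^ m) = c * δ ^ m from by ring, hpow, hmK]
      field_simp
    rw [hf'eq] at hF'
    have hnum : HasDerivAt (fun x => x^(k+1) * F x)
        ((K+1)*δ^k * F δ + δ^(k+1) * (-(K*(K+1))*(α - F δ)/δ)) δ := by
      have h1 := (hasDerivAt_pow (k+1) δ).mul hF'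
      convert h1 using 2
      case e'_4 => rfl
      case e'_5 => rfl
      case e'_8 => rfl
      push_cast
      rw [hKdef]
    have hden : HasDerivAt (fun x => (1 + F x/K)^p)
        ((-(K*(K+1))*(α - F δ)/δ)/K * p * (1 + F δ/K)^(p-1)) δ :=
      ((hF'.div_const K).const_add 1).rpow_const (Or.inl hupos.ne')
    have hdne : (1 + F δ/K) ^ p ≠ 0 := (Real.rpow_pos_of_pos hupos p).ne'
    have hR' := hnum.div hden hdne
    have hRfun : R = fun y => y ^ (k+1) * F y / (1 + F y / K) ^ p := rfl
    rw [hRfun]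
    convert hR' using 1
    case e'_4 => rfl
    case e'_5 => rfl
    case e'_8 => rfl
    have hup : (1 + F δ/K)^p = (1 + F δ/K)^(p-1) * (1 + F δ/K) := by
      rw [← Real.rpow_add_one hupos.ne' (p-1)]
      ring_nf
    rw [hup, hp]
    have hps : δ ^ (k+1) = δ ^ k * δ := pow_succ δ k
    rw [hps]
    field_simp
    ring
  -- the quadratic and the critical point
  obtain ⟨f₀, hf₀pos, hf₀α, hQpos, hQneg⟩ := quad_aux K α hK1 hα
  have hm0 : (m:ℝ) ≠ 0 := by rw [hmK]; positivity
  have hαf₀ : 0 < (α - f₀)/c := div_pos (by linarith) hc0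
  set δ₁ : ℝ := ((α - f₀)/c) ^ ((1:ℝ)/(m:ℝ)) with hδ₁def
  have hδ₁pos : 0 < δ₁ := Real.rpow_pos_of_pos hαf₀ _
  have hδ₁m : δ₁ ^ m = (α - f₀)/c := by
    rw [← Real.rpow_natCast δ₁ m, hδ₁def, ← Real.rpow_mul hαf₀.le]
    rw [show (1:ℝ)/(m:ℝ) * (m:ℝ) = 1 from by field_simp, Real.rpow_one]
  have hFδ₁ : F δ₁ = f₀ := by
    rw [hFdef, hδ₁m]
    field_simp
    ring
  have hδ₁lt : δ₁ < δ₀ := by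
    by_contra h
    push_neg at h
    rcases eq_or_lt_of_le h with h' | h'
    · rw [← h', hFδ₀] at hFδ₁; linarith
    · have := hFanti δ₀ δ₁ hδ₀pos.le h'
      rw [hFδ₁, hFδ₀] at this; linarith
  -- continuity on [0, δ₀]
  have hRfun : R = fun y => y ^ (k+1) * F y / (1 + F y / K) ^ p := rfl
  have hRcontOn : ContinuousOn R (Set.Icc 0 δ₀) := by
    rw [hRfun]
    apply ContinuousOn.div
    · exact ((continuous_pow (k+1)).mul hFc).continuousOn
    · apply ContinuousOn.rpow_const
      · exact (continuous_const.add (hFc.div_const K)).continuousOn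
      · intro x _; exact Or.inr hp0
    · intro x hx
      exact (Real.rpow_pos_of_pos (hu x hx.1 hx.2) p).ne'
  -- strict monotonicity on (0, δ₁]
  have hmono : StrictMonoOn R (Set.Ioc 0 δ₁) := by
    apply strictMonoOn_of_deriv_pos (convex_Ioc 0 δ₁)
    · exact hRcontOn.mono (fun x hx => ⟨hx.1.le, hx.2.trans hδ₁lt.le⟩)
    · intro x hx
      rw [interior_Ioc] at hx
      obtain ⟨hx0, hx1⟩ := hx
      have hxδ₀ : x < δ₀ := hx1.trans hδ₁lt
      rw [(hderiv x ⟨hx0, hxδ₀⟩).deriv]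
      have hfx : f₀ < F x := by
        have := hFanti x δ₁ hx0.le hx1
        rw [hFδ₁] at this; linarith
      have hQ := hQpos (F x) hfx (hFle x hx0.le)
      have hux := hu x hx0.le hxδ₀.le
      apply div_pos
      · exact mul_pos (Real.rpow_pos_of_pos hux _)
          (mul_pos (mul_pos (by linarith) (pow_pos hx0 k)) hQ)
      · positivity
  -- strict antitonicity on [δ₁, δ₀]
  have hanti : StrictAntiOn R (Set.Icc δ₁ δ₀) := by
    apply strictAntiOn_of_deriv_neg (convex_Icc δ₁ δ₀)
    · exact hRcontOn.mono (fun x hx => ⟨hδ₁pos.le.trans hx.1, hx.2⟩)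
    · intro x hx
      rw [interior_Icc] at hx
      obtain ⟨hx1, hx2⟩ := hx
      have hx0 : 0 < x := hδ₁pos.trans hx1
      rw [(hderiv x ⟨hx0, hx2⟩).deriv]
      have hfx : F x < f₀ := by
        have := hFanti δ₁ x hδ₁pos.le hx1
        rw [hFδ₁] at this; linarith
      have hQ := hQneg (F x) (hFpos x hx0.le hx2).le hfx
      apply div_neg_of_neg_of_pos
      · exact mul_neg_of_pos_of_neg (Real.rpow_pos_of_pos (hu x hx0.le hx2.le) _)
          (mul_neg_of_pos_of_neg (mul_pos (by linarith) (pow_pos hx0 k)) hQ)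
      · exact pow_pos (Real.rpow_pos_of_pos (hu x hx0.le hx2.le) p) 2
  refine ⟨part1, part2, part3, δ₁, ⟨⟨hδ₁pos, hδ₁lt⟩, hmono, hanti⟩, ?_⟩
  rintro y ⟨⟨hy0, hyδ₀⟩, hymono, hyanti⟩
  by_contra hne
  rcases lt_or_gt_of_ne hne with hlt | hgt
  · obtain ⟨t, ht1, ht2⟩ := exists_between hlt
    have h1 : R t < R δ₁ := hmono ⟨hy0.trans ht1, ht2.le⟩ ⟨hδ₁pos, le_rfl⟩ ht2
    have h2 : R δ₁ < R t := hyanti ⟨ht1.le, (ht2.trans hδ₁lt).le⟩ ⟨hlt.le, hδ₁lt.le⟩ ht2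
    linarith
  · obtain ⟨t, ht1, ht2⟩ := exists_between hgt
    have h1 : R t < R y := hymono ⟨hδ₁pos.trans ht1, ht2.le⟩ ⟨hy0, le_rfl⟩ ht2
    have h2 : R y < R t := hanti ⟨ht1.le, (ht2.trans hyδ₀).le⟩ ⟨hgt.le, hyδ₀.le⟩ ht2
    linarith
end
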